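/- If (x̄, ȳ, ȳ, ū) is a KKT point of the simplified WDP reformulation, then (x̄, ȳ, ū) is a strongly stationary (S-stationary) point of the simplified MPEC reformulation. Concretely, if there exist multipliers (η^g, η^u, α, β) satisfying the WDP KKT system (equations involving ∇F, ∇²L, sign and complementarity conditions), then setting λ^g := η^g − αū, λ^u := η^u + α g(x̄,ȳ), γ := β yields multipliers verifying the S-stationarity conditions: λ^g_i = 0 for i with g_i(x̄,ȳ) < 0 and ū_i = 0; λ^u_i = 0 for i with g_i(x̄,ȳ) = 0 and ū_i > 0; λ^g_i ≥ 0, λ^u_i ≥ 0 for i with g_i(x̄,ȳ) = ū_i = 0. -/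

import Mathlib

open scoped BigOperators

/-- If `(x̄,ȳ,ȳ,ū)` is a KKT point of the simplified WDP reformulation with
multipliers `(η^g, η^u, α, β)`, then setting `λ^g := η^g − αū`,
`λ^u := η^u + α g(x̄,ȳ)`, `γ := β` yields multipliers showing that
`(x̄,ȳ,ū)` is an S-stationary point of the simplified MPEC. -/
theorem wdp_kkt_implies_mpec_sstationary
    {n m p : ℕ}
    (F : (Fin n → ℝ) → (Fin m → ℝ) → ℝ)
    (f : (Fin n → ℝ) → (Fin m → ℝ) → ℝ)
    (g : (Fin n → ℝ) → (Fin m → ℝ) → Fin p → ℝ)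
    (hF : ContDiff ℝ 2 (fun xy : (Fin n → ℝ) × (Fin m → ℝ) => F xy.1 xy.2))
    (hf : ContDiff ℝ 2 (fun xy : (Fin n → ℝ) × (Fin m → ℝ) => f xy.1 xy.2))
    (hg : ∀ i, ContDiff ℝ 2 (fun xy : (Fin n → ℝ) × (Fin m → ℝ) => g xy.1 xy.2 i))
    (L : (Fin n → ℝ) → (Fin m → ℝ) → (Fin p → ℝ) → ℝ)
    (hL : ∀ x z u, L x z u = f x z + ∑ i, u i * g x z i)
    (xbar : Fin n → ℝ) (ybar : Fin m → ℝ) (ubar : Fin p → ℝ)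
    (ηg ηu : Fin p → ℝ) (α : ℝ) (β : Fin m → ℝ)
    -- (WDPKKT-1)
    (w1 : fderiv ℝ (fun x' => F x' ybar) xbar +
        fderiv ℝ (fun x' => fderiv ℝ (fun y' => L x' y' ubar) ybar β) xbar +
        (∑ i, (ηg i - α * ubar i) • fderiv ℝ (fun x' => g x' ybar i) xbar) = 0)
    -- (WDPKKT-2)
    (w2 : fderiv ℝ (fun y' => F xbar y') ybar +
        α • fderiv ℝ (fun y' => f xbar y') ybar +
        (∑ i, ηg i • fderiv ℝ (fun y' => g xbar y' i) ybar) = 0)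
    -- (WDPKKT-3)
    (w3 : -α • fderiv ℝ (fun y' => L xbar y' ubar) ybar +
        fderiv ℝ (fun y' => fderiv ℝ (fun y'' => L xbar y'' ubar) y' β) ybar = 0)
    -- (WDPKKT-4)
    (w4 : ∀ i, -α * g xbar ybar i +
        fderiv ℝ (fun y' => g xbar y' i) ybar β - ηu i = 0)
    -- (WDPKKT-6)
    (w6 : fderiv ℝ (fun y' => L xbar y' ubar) ybar = 0)
    -- (WDPKKT-8): 0 ≤ α ⟂ ūᵀg(x̄,ȳ) ≥ 0
    (w8 : 0 ≤ α ∧ 0 ≤ (∑ i, ubar i * g xbar ybar i) ∧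
        α * (∑ i, ubar i * g xbar ybar i) = 0)
    -- (WDPKKT-9): 0 ≤ η^g ⟂ g(x̄,ȳ) ≤ 0
    (w9 : ∀ i, 0 ≤ ηg i ∧ g xbar ybar i ≤ 0 ∧ ηg i * g xbar ybar i = 0)
    -- (WDPKKT-10): 0 ≤ η^u ⟂ ū ≥ 0
    (w10 : ∀ i, 0 ≤ ηu i ∧ 0 ≤ ubar i ∧ ηu i * ubar i = 0) :
    -- S-stationarity of (x̄,ȳ,ū) for the simplified MPEC with multipliers
    -- λ^g := η^g − αū, λ^u := η^u + α g(x̄,ȳ), γ := β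
    ∃ (lamg lamu : Fin p → ℝ) (γ : Fin m → ℝ),
      lamg = (fun i => ηg i - α * ubar i) ∧
      lamu = (fun i => ηu i + α * g xbar ybar i) ∧
      γ = β ∧
      -- (MPCC-1)
      (fderiv ℝ (fun x' => F x' ybar) xbar +
        fderiv ℝ (fun x' => fderiv ℝ (fun y' => L x' y' ubar) ybar γ) xbar +
        (∑ i, lamg i • fderiv ℝ (fun x' => g x' ybar i) xbar) = 0) ∧
      -- (MPCC-2)
      (fderiv ℝ (fun y' => F xbar y') ybar +
        fderiv ℝ (fun y' => fderiv ℝ (fun y'' => L xbar y'' ubar) y' γ) ybar +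
        (∑ i, lamg i • fderiv ℝ (fun y' => g xbar y' i) ybar) = 0) ∧
      -- (MPCC-3)
      (∀ i, fderiv ℝ (fun y' => g xbar y' i) ybar γ - lamu i = 0) ∧
      -- (MPCC-4)
      (fderiv ℝ (fun y' => L xbar y' ubar) ybar = 0 ∧
        (∀ i, g xbar ybar i ≤ 0) ∧ (∀ i, 0 ≤ ubar i)) ∧
      -- (MPCC-6)
      (∀ i, g xbar ybar i < 0 → ubar i = 0 → lamg i = 0) ∧
      -- (MPCC-7)
      (∀ i, g xbar ybar i = 0 → 0 < ubar i → lamu i = 0) ∧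
      -- (MPCC-8)
      (∀ i, g xbar ybar i = 0 → ubar i = 0 → 0 ≤ lamg i ∧ 0 ≤ lamu i) := by
  -- differentiability facts
  have hfdiff : DifferentiableAt ℝ (fun y' => f xbar y') ybar := by
    have h1 : DifferentiableAt ℝ (fun xy : (Fin n → ℝ) × (Fin m → ℝ) => f xy.1 xy.2)
        (xbar, ybar) := (hf.differentiable (by norm_num)).differentiableAt
    exact h1.comp ybar ((differentiableAt_const _).prodMk differentiableAt_id)
  have hgdiff : ∀ i, DifferentiableAt ℝ (fun y' => g xbar y' i) ybar := by
    intro i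
    have h1 : DifferentiableAt ℝ (fun xy : (Fin n → ℝ) × (Fin m → ℝ) => g xy.1 xy.2 i)
        (xbar, ybar) := ((hg i).differentiable (by norm_num)).differentiableAt
    exact h1.comp ybar ((differentiableAt_const _).prodMk differentiableAt_id)
  -- fderiv of L in y splits
  have hLrw : (fun y' => L xbar y' ubar)
      = fun y' => f xbar y' + ∑ i, ubar i * g xbar y' i :=
    funext fun y => hL xbar y ubar
  have key : fderiv ℝ (fun y' => L xbar y' ubar) ybar
      = fderiv ℝ (fun y' => f xbar y') ybar
        + ∑ i, ubar i • fderiv ℝ (fun y' => g xbar y' i) ybar := by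
    rw [hLrw, fderiv_fun_add hfdiff
        (DifferentiableAt.fun_sum fun i _ => (hgdiff i).const_mul (ubar i)),
      fderiv_fun_sum (fun i _ => (hgdiff i).const_mul (ubar i))]
    congr 1
    exact Finset.sum_congr rfl fun i _ => fderiv_const_mul (hgdiff i) (ubar i)
  have e2 : fderiv ℝ (fun y' => f xbar y') ybar
      + ∑ i, ubar i • fderiv ℝ (fun y' => g xbar y' i) ybar = 0 := by
    rw [← key, w6]
  -- second-order term vanishes
  have hT : fderiv ℝ (fun y' => fderiv ℝ (fun y'' => L xbar y'' ubar) y' β) ybar = 0 := by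
    have := w3
    rw [w6] at this
    simpa using this
  refine ⟨_, _, _, rfl, rfl, rfl, ?_, ?_, ?_, ?_, ?_, ?_, ?_⟩
  · exact w1
  · -- MPCC-2
    rw [hT]
    have hsplit : (∑ i, (ηg i - α * ubar i) • fderiv ℝ (fun y' => g xbar y' i) ybar)
        = (∑ i, ηg i • fderiv ℝ (fun y' => g xbar y' i) ybar)
          - α • ∑ i, ubar i • fderiv ℝ (fun y' => g xbar y' i) ybar := by
      rw [Finset.smul_sum, ← Finset.sum_sub_distrib]
      exact Finset.sum_congr rfl fun i _ => by module
    rw [hsplit]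
    calc fderiv ℝ (fun y' => F xbar y') ybar + 0 +
          ((∑ i, ηg i • fderiv ℝ (fun y' => g xbar y' i) ybar)
            - α • ∑ i, ubar i • fderiv ℝ (fun y' => g xbar y' i) ybar)
        = (fderiv ℝ (fun y' => F xbar y') ybar
            + α • fderiv ℝ (fun y' => f xbar y') ybar
            + ∑ i, ηg i • fderiv ℝ (fun y' => g xbar y' i) ybar)
          - α • (fderiv ℝ (fun y' => f xbar y') ybar
            + ∑ i, ubar i • fderiv ℝ (fun y' => g xbar y' i) ybar) := by module
      _ = 0 := by rw [w2, e2]; simp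
  · intro i
    have := w4 i
    show fderiv ℝ (fun y' => g xbar y' i) ybar β - (ηu i + α * g xbar ybar i) = 0
    linarith
  · exact ⟨w6, fun i => (w9 i).2.1, fun i => (w10 i).2.1⟩
  · intro i h1 h2
    have h9 := w9 i
    have : ηg i = 0 := by
      rcases mul_eq_zero.mp h9.2.2 with h | h
      · exact h
      · exact absurd h (ne_of_lt h1)
    simp [this, h2]
  · intro i h1 h2
    have h10 := w10 i
    have : ηu i = 0 := by
      rcases mul_eq_zero.mp h10.2.2 with h | h
      · exact h
      · exact absurd h (ne_of_gt h2)
    simp [this, h1]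
  · intro i h1 h2
    constructor
    · simp [h2]; exact (w9 i).1
    · simp [h1]; exact (w10 i).1
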